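/- Let (Ω, ℱ, P) be a probability space, W : Ω → 𝒲 measurable with 𝒲 countable, A, Ã : Ω → ℝ measurable, U : Ω → 𝒰 measurable into a measurable space, f : ℝ × 𝒲 × 𝒰 → [0,1] measurable, Y := f(A, W, U), and v ∈ ℝ. Assume for every w ∈ 𝒲 with P(W = w) > 0: (i) P({A ≥ v} ∩ {W = w}) > 0; (ii) A and U are independent under the conditional measure P(· ∣ W = w); (iii) Ã and U are independent under P(· ∣ W = w); (iv) the law of Ã under P(· ∣ W = w) equals the law of A under P(· ∣ {A ≥ v} ∩ {W = w}). Then the expected counterfactual outcome under the threshold intervention equals the covariate-adjusted threshold-response: E[f(Ã, W, U)] = Σ_{w : P(W=w)>0} P(W = w)·E[Y ∣ {A ≥ v} ∩ {W = w}]. -/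

import Mathlib

open MeasureTheory ProbabilityTheory

/-- Auxiliary: if `A` and `U` are independent under a finite measure `ρ`, then after
conditioning on an event `A ⁻¹' T` (of positive probability), the joint law of `(A, U)`
is the product of the conditional law of `A` and the (unconditional) law of `U`. -/
lemma aux_cond_prod {Ω β γ : Type*} [MeasurableSpace Ω] [MeasurableSpace β] [MeasurableSpace γ]
    (ρ : Measure Ω) [IsFiniteMeasure ρ] (A : Ω → β) (U : Ω → γ)
    (hA : Measurable A) (hU : Measurable U) (hInd : IndepFun A U ρ)
    (T : Set β) (hT : MeasurableSet T) (hpos : ρ (A ⁻¹' T) ≠ 0) :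
    Measure.map (fun ω => (A ω, U ω)) (ρ[|A ⁻¹' T]) =
      (Measure.map A (ρ[|A ⁻¹' T])).prod (Measure.map U ρ) := by
  haveI : IsProbabilityMeasure (ρ[|A ⁻¹' T]) := cond_isProbabilityMeasure hpos
  haveI : IsProbabilityMeasure (Measure.map A (ρ[|A ⁻¹' T])) :=
    Measure.isProbabilityMeasure_map hA.aemeasurable
  haveI : IsFiniteMeasure (Measure.map U ρ) :=
    Measure.isFiniteMeasure_map ρ U
  refine (Measure.prod_eq fun s t hs ht => ?_).symm
  rw [Measure.map_apply (hA.prodMk hU) (hs.prod ht),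
    Measure.map_apply hA hs, Measure.map_apply hU ht]
  have hpre : (fun ω => (A ω, U ω)) ⁻¹' (s ×ˢ t) = A ⁻¹' s ∩ U ⁻¹' t := by
    ext ω; simp [Set.mem_prod]
  rw [hpre, cond_apply (hA hT), cond_apply (hA hT)]
  have h1 : A ⁻¹' T ∩ (A ⁻¹' s ∩ U ⁻¹' t) = A ⁻¹' (T ∩ s) ∩ U ⁻¹' t := by
    rw [Set.preimage_inter, Set.inter_assoc]
  have h2 : A ⁻¹' T ∩ A ⁻¹' s = A ⁻¹' (T ∩ s) := (Set.preimage_inter).symm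
  rw [h1, h2, hInd.measure_inter_preimage_eq_mul (T ∩ s) t (hT.inter hs) ht]
  ring

theorem stmt2 {Ω 𝒲 𝒰 : Type*} [MeasurableSpace Ω] [MeasurableSpace 𝒲] [MeasurableSpace 𝒰]
    [Countable 𝒲] [MeasurableSingletonClass 𝒲]
    (μ : Measure Ω) [IsProbabilityMeasure μ]
    (W : Ω → 𝒲) (A Atil : Ω → ℝ) (U : Ω → 𝒰)
    (hWmeas : Measurable W) (hAmeas : Measurable A) (hAtilmeas : Measurable Atil)
    (hUmeas : Measurable U)
    (f : ℝ → 𝒲 → 𝒰 → ℝ)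
    (hfmeas : Measurable (fun p : ℝ × 𝒲 × 𝒰 => f p.1 p.2.1 p.2.2))
    (hf01 : ∀ x w u, f x w u ∈ Set.Icc (0 : ℝ) 1)
    (Y : Ω → ℝ) (hYdef : Y = fun ω => f (A ω) (W ω) (U ω))
    (v : ℝ)
    (hyp : ∀ w : 𝒲, 0 < μ (W ⁻¹' {w}) →
      (0 < μ ({ω | v ≤ A ω} ∩ W ⁻¹' {w})) ∧
      IndepFun A U (μ[|W ⁻¹' {w}]) ∧
      IndepFun Atil U (μ[|W ⁻¹' {w}]) ∧
      Measure.map Atil (μ[|W ⁻¹' {w}]) =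
        Measure.map A (μ[|{ω | v ≤ A ω} ∩ W ⁻¹' {w}])) :
    ∫ ω, f (Atil ω) (W ω) (U ω) ∂μ =
      ∑' w : {w : 𝒲 // 0 < μ (W ⁻¹' {w})},
        (μ (W ⁻¹' {(w : 𝒲)})).toReal *
          ∫ ω, Y ω ∂(μ[|{ω | v ≤ A ω} ∩ W ⁻¹' {(w : 𝒲)}]) := by
  classical
  have hsmeas : ∀ w : 𝒲, MeasurableSet (W ⁻¹' {w}) :=
    fun w => hWmeas (measurableSet_singleton w)
  have hVmeas : MeasurableSet {ω | v ≤ A ω} := measurableSet_le measurable_const hAmeas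
  set g : Ω → ℝ := fun ω => f (Atil ω) (W ω) (U ω) with hg
  have hgmeas : Measurable g := hfmeas.comp (hAtilmeas.prodMk (hWmeas.prodMk hUmeas))
  have hbound : ∀ x w u, ‖f x w u‖ ≤ 1 := by
    intro x w u
    rw [Real.norm_eq_abs, abs_le]
    exact ⟨le_trans (by norm_num) (hf01 x w u).1, (hf01 x w u).2⟩
  have hgint : Integrable g μ :=
    ⟨hgmeas.aestronglyMeasurable,
      HasFiniteIntegral.of_bounded (C := 1) (ae_of_all μ fun ω => hbound _ _ _)⟩
  -- the per-stratum key equality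
  have key : ∀ w : 𝒲, 0 < μ (W ⁻¹' {w}) →
      ∫ ω, g ω ∂(μ[|W ⁻¹' {w}]) = ∫ ω, Y ω ∂(μ[|{ω | v ≤ A ω} ∩ W ⁻¹' {w}]) := by
    intro w hw
    obtain ⟨hTpos, hAU, hAtU, hmap⟩ := hyp w hw
    set sW : Set Ω := W ⁻¹' {w} with hsW
    set Tset : Set Ω := {ω | v ≤ A ω} ∩ sW with hTset
    haveI hPs : IsProbabilityMeasure (μ[|sW]) := cond_isProbabilityMeasure hw.ne'
    haveI hPT : IsProbabilityMeasure (μ[|Tset]) := cond_isProbabilityMeasure hTpos.ne'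
    have hcond2 : (μ[|sW])[|{ω | v ≤ A ω}] = μ[|Tset] := by
      rw [cond_cond_eq_cond_inter (hsmeas w) hVmeas μ, hTset, Set.inter_comm]
    -- a.e. equality of W with w
    have haeW : ∀ᵐ ω ∂(μ[|sW]), W ω = w := by
      rw [ae_iff]
      rw [cond_apply (hsmeas w)]
      have : sW ∩ {ω | ¬ W ω = w} = ∅ := by
        ext ω; simp [hsW]
      rw [this]
      simp
    have haeW' : ∀ᵐ ω ∂(μ[|Tset]), W ω = w := by
      rw [ae_iff]
      rw [cond_apply (hVmeas.inter (hsmeas w))]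
      have : Tset ∩ {ω | ¬ W ω = w} = ∅ := by
        ext ω; simp only [hTset, hsW, Set.mem_inter_iff, Set.mem_preimage,
          Set.mem_singleton_iff, Set.mem_setOf_eq, Set.mem_empty_iff_false]
        tauto
      rw [this]
      simp
    -- the fixed-w integrand
    set F : ℝ × 𝒰 → ℝ := fun p => f p.1 w p.2 with hF
    have hFmeas : Measurable F :=
      hfmeas.comp (measurable_fst.prodMk (measurable_const.prodMk measurable_snd))
    -- positivity of the conditional threshold event
    have hposV : (μ[|sW]) (A ⁻¹' Set.Ici v) ≠ 0 := by
      have hset : A ⁻¹' Set.Ici v = {ω | v ≤ A ω} := rfl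
      rw [hset, cond_apply (hsmeas w)]
      have hinter : sW ∩ {ω | v ≤ A ω} = Tset := by rw [hTset, Set.inter_comm]
      rw [hinter]
      exact mul_ne_zero (ENNReal.inv_ne_zero.mpr (measure_ne_top μ _)) hTpos.ne'
    -- product structure for the intervened pair
    have hprodAtil : Measure.map (fun ω => (Atil ω, U ω)) (μ[|sW]) =
        (Measure.map Atil (μ[|sW])).prod (Measure.map U (μ[|sW])) :=
      (indepFun_iff_map_prod_eq_prod_map_map hAtilmeas.aemeasurable hUmeas.aemeasurable).mp hAtU
    -- product structure for the conditioned natural pair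
    have hprodA : Measure.map (fun ω => (A ω, U ω)) (μ[|Tset]) =
        (Measure.map A (μ[|Tset])).prod (Measure.map U (μ[|sW])) := by
      have := aux_cond_prod (μ[|sW]) A U hAmeas hUmeas hAU (Set.Ici v) measurableSet_Ici hposV
      have hset : (μ[|sW])[|A ⁻¹' Set.Ici v] = μ[|Tset] := hcond2
      rw [hset] at this
      exact this
    calc ∫ ω, g ω ∂(μ[|sW])
        = ∫ ω, F (Atil ω, U ω) ∂(μ[|sW]) := by
          refine integral_congr_ae (haeW.mono fun ω hωW => ?_)
          simp only [hg, hF, hωW]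
      _ = ∫ p, F p ∂(Measure.map (fun ω => (Atil ω, U ω)) (μ[|sW])) :=
          (integral_map (hAtilmeas.prodMk hUmeas).aemeasurable
            hFmeas.aestronglyMeasurable).symm
      _ = ∫ p, F p ∂((Measure.map Atil (μ[|sW])).prod (Measure.map U (μ[|sW]))) := by
          rw [hprodAtil]
      _ = ∫ p, F p ∂((Measure.map A (μ[|Tset])).prod (Measure.map U (μ[|sW]))) := by
          rw [hmap]
      _ = ∫ p, F p ∂(Measure.map (fun ω => (A ω, U ω)) (μ[|Tset])) := by
          rw [hprodA]
      _ = ∫ ω, F (A ω, U ω) ∂(μ[|Tset]) :=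
          integral_map (hAmeas.prodMk hUmeas).aemeasurable hFmeas.aestronglyMeasurable
      _ = ∫ ω, Y ω ∂(μ[|Tset]) := by
          refine integral_congr_ae (haeW'.mono fun ω hωW => ?_)
          simp only [hYdef, hF, hωW]
  -- decomposition of the total integral
  have hUnion : ⋃ w : 𝒲, W ⁻¹' {w} = Set.univ := by
    ext ω; simp
  have hdisj : Pairwise (Function.onFun Disjoint fun w : 𝒲 => W ⁻¹' {w}) := by
    intro i j hij
    simp only [Function.onFun, Set.disjoint_left]
    intro ω hi hj
    exact hij (by rw [← hi, ← hj])
  have step1 : ∫ ω, g ω ∂μ = ∑' w : 𝒲, ∫ ω in W ⁻¹' {w}, g ω ∂μ := by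
    calc ∫ ω, g ω ∂μ = ∫ ω in ⋃ w : 𝒲, W ⁻¹' {w}, g ω ∂μ := by
          rw [hUnion, Measure.restrict_univ]
      _ = ∑' w : 𝒲, ∫ ω in W ⁻¹' {w}, g ω ∂μ :=
          integral_iUnion hsmeas hdisj (by rw [hUnion]; exact hgint.integrableOn)
  have hterm : ∀ w : 𝒲, ∫ ω in W ⁻¹' {w}, g ω ∂μ =
      (μ (W ⁻¹' {w})).toReal * ∫ ω, Y ω ∂(μ[|{ω | v ≤ A ω} ∩ W ⁻¹' {w}]) := by
    intro w
    by_cases h0 : μ (W ⁻¹' {w}) = 0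
    · have hres : μ.restrict (W ⁻¹' {w}) = 0 := Measure.restrict_eq_zero.mpr h0
      rw [h0]
      simp [hres]
    · have hw : 0 < μ (W ⁻¹' {w}) := lt_of_le_of_ne zero_le (Ne.symm h0)
      have hcond : ∫ ω, g ω ∂(μ[|W ⁻¹' {w}]) =
          (μ (W ⁻¹' {w})).toReal⁻¹ * ∫ ω in W ⁻¹' {w}, g ω ∂μ := by
        rw [ProbabilityTheory.cond, integral_smul_measure, ENNReal.toReal_inv, smul_eq_mul]
      have hne : (μ (W ⁻¹' {w})).toReal ≠ 0 :=
        ENNReal.toReal_ne_zero.mpr ⟨h0, measure_ne_top μ _⟩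
      rw [← key w hw, hcond, ← mul_assoc, mul_inv_cancel₀ hne, one_mul]
  have hsupp : Function.support
      (fun w : 𝒲 => ∫ ω in W ⁻¹' {w}, g ω ∂μ) ⊆ {w : 𝒲 | 0 < μ (W ⁻¹' {w})} := by
    intro w hwne
    by_contra hcon
    have h0 : μ (W ⁻¹' {w}) = 0 := by
      simpa [Set.mem_setOf_eq, pos_iff_ne_zero, not_not] using hcon
    exact hwne (by simp [Measure.restrict_eq_zero.mpr h0])
  calc ∫ ω, g ω ∂μ = ∑' w : 𝒲, ∫ ω in W ⁻¹' {w}, g ω ∂μ := step1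
    _ = ∑' w : {w : 𝒲 // 0 < μ (W ⁻¹' {w})}, ∫ ω in W ⁻¹' {(w : 𝒲)}, g ω ∂μ :=
        (tsum_subtype_eq_of_support_subset hsupp).symm
    _ = ∑' w : {w : 𝒲 // 0 < μ (W ⁻¹' {w})},
          (μ (W ⁻¹' {(w : 𝒲)})).toReal *
            ∫ ω, Y ω ∂(μ[|{ω | v ≤ A ω} ∩ W ⁻¹' {(w : 𝒲)}]) :=
        tsum_congr fun w => hterm w
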